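/- Let R be a commutative ring and ≿ a total preorder on R compatible with the ring structure in the sense that t ≿ t', u ≿ u' implies t·u + t'·u' ≿ t·u' + t'·u (the Sub axiom), together with distributivity. Then for terms t₁ ≿ t'₁, …, tₙ ≿ t'ₙ, the sum of all products s₁⋯sₙ with sᵢ ∈ {tᵢ, t'ᵢ} having an even number of primed factors dominates (under ≿) the sum of those products with an odd number of primed factors. -/
import Mathlib

open Finset

lemma aux_card {n : ℕ} (b : Bool) (s : Fin n → Bool) :
    (Finset.univ.filter (fun i : Fin (n + 1) =>
        (Fin.cons b s : Fin (n + 1) → Bool) i = true)).card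
      = (if b then 1 else 0) + (Finset.univ.filter (fun i => s i = true)).card := by
  rw [Finset.card_filter, Fin.sum_univ_succ, Finset.card_filter]
  simp [Fin.cons_zero, Fin.cons_succ]

lemma aux_split {R : Type*} [CommRing R] (n p : ℕ) (t t' : Fin (n + 1) → R) :
    (∑ s ∈ Finset.univ.filter (fun s : Fin (n + 1) → Bool =>
        (Finset.univ.filter (fun i => s i = true)).card % 2 = p),
      ∏ i, if s i then t' i else t i)
    = t 0 * (∑ s ∈ Finset.univ.filter (fun s : Fin n → Bool =>
        (Finset.univ.filter (fun i => s i = true)).card % 2 = p),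
      ∏ i, if s i then t' i.succ else t i.succ)
    + t' 0 * (∑ s ∈ Finset.univ.filter (fun s : Fin n → Bool =>
        (1 + (Finset.univ.filter (fun i => s i = true)).card) % 2 = p),
      ∏ i, if s i then t' i.succ else t i.succ) := by
  rw [Finset.sum_filter]
  rw [← Equiv.sum_comp (Fin.consEquiv (fun _ => Bool))
    (fun s => if (Finset.univ.filter (fun i => s i = true)).card % 2 = p
      then ∏ i, if s i then t' i else t i else 0)]
  rw [Fintype.sum_prod_type, Fintype.sum_bool]
  simp only [Fin.consEquiv_apply, aux_card, Fin.prod_univ_succ, Fin.cons_zero, Fin.cons_succ,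
    if_true, if_false, Bool.cond_true, zero_add, Bool.false_eq_true, ite_false, ite_true]
  rw [Finset.sum_filter, Finset.sum_filter, Finset.mul_sum, Finset.mul_sum]
  rw [add_comm]
  congr 1 <;> apply Finset.sum_congr rfl <;> intro s _ <;> split <;> simp

theorem stmt_16 {R : Type*} [CommRing R] (r : R → R → Prop)
    (hrefl : ∀ a, r a a) (htrans : ∀ a b c, r a b → r b c → r a c)
    (htot : ∀ a b, r a b ∨ r b a)
    (hsub : ∀ t t' u u', r t t' → r u u' → r (t * u + t' * u') (t * u' + t' * u))
    (n : ℕ) (t t' : Fin n → R) (h : ∀ i, r (t i) (t' i)) :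
    r (∑ s ∈ Finset.univ.filter (fun s : Fin n → Bool =>
          (Finset.univ.filter (fun i => s i = true)).card % 2 = 0),
        ∏ i, if s i then t' i else t i)
      (∑ s ∈ Finset.univ.filter (fun s : Fin n → Bool =>
          (Finset.univ.filter (fun i => s i = true)).card % 2 = 1),
        ∏ i, if s i then t' i else t i) := by
  rcases htot 1 0 with h10 | h01
  · induction n with
    | zero => simpa using h10
    | succ m ih =>
        rw [aux_split, aux_split]
        have e0 : (Finset.univ.filter (fun s : Fin m → Bool =>
            (1 + (Finset.univ.filter (fun i => s i = true)).card) % 2 = 0))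
            = Finset.univ.filter (fun s : Fin m → Bool =>
            (Finset.univ.filter (fun i => s i = true)).card % 2 = 1) := by
          apply Finset.filter_congr; intro s _; constructor <;> intro hc <;> omega
        have e1 : (Finset.univ.filter (fun s : Fin m → Bool =>
            (1 + (Finset.univ.filter (fun i => s i = true)).card) % 2 = 1))
            = Finset.univ.filter (fun s : Fin m → Bool =>
            (Finset.univ.filter (fun i => s i = true)).card % 2 = 0) := by
          apply Finset.filter_congr; intro s _; constructor <;> intro hc <;> omega
        rw [e0, e1]
        exact hsub _ _ _ _ (h 0)
          (ih (fun i => t i.succ) (fun i => t' i.succ) (fun i => h i.succ))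
  · have hall : ∀ a b : R, r a b := by
      intro a b
      rcases htot a b with hab | hba
      · exact hab
      · simpa using hsub b a 0 1 hba h01
    exact hall _ _
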